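/- Let a > b ≥ 0 be integers, S = {x + yi : 0 ≤ x < a, 0 ≤ y < a}, and T = {x + yi : 0 ≤ x < b, −b ≤ y < 0}. Then no two distinct elements of S ∪ T are congruent modulo a + bi, and |S ∪ T| = a² + b², so S ∪ T is a complete set of residues modulo a + bi. -/

import Mathlib

open GaussianInt

lemma mk_dvd_iff (a b : ℤ) (z : GaussianInt) :
    (⟨a, b⟩ : GaussianInt) ∣ z ↔ ∃ m n : ℤ, z.re = m * a - n * b ∧ z.im = m * b + n * a := by
  constructor
  · rintro ⟨q, rfl⟩
    refine ⟨q.re, q.im, ?_, ?_⟩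
    · simp [Zsqrtd.re_mul]; ring
    · simp [Zsqrtd.im_mul]; ring
  · rintro ⟨m, n, h1, h2⟩
    refine ⟨⟨m, n⟩, ?_⟩
    ext
    · simp [Zsqrtd.re_mul]; linarith
    · simp [Zsqrtd.im_mul]; linarith

lemma no_congr (a b : ℤ) (hab : b < a) (hb : 0 ≤ b) (u v : GaussianInt)
    (hu : (0 ≤ u.re ∧ u.re < a ∧ 0 ≤ u.im ∧ u.im < a) ∨
          (0 ≤ u.re ∧ u.re < b ∧ -b ≤ u.im ∧ u.im < 0))
    (hv : (0 ≤ v.re ∧ v.re < a ∧ 0 ≤ v.im ∧ v.im < a) ∨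
          (0 ≤ v.re ∧ v.re < b ∧ -b ≤ v.im ∧ v.im < 0))
    (hne : u ≠ v) : ¬ (⟨a, b⟩ : GaussianInt) ∣ (u - v) := by
  intro hdvd
  rw [mk_dvd_iff] at hdvd
  obtain ⟨m, n, hre, him⟩ := hdvd
  rw [Zsqrtd.re_sub] at hre
  rw [Zsqrtd.im_sub] at him
  have hcoord : u.re ≠ v.re ∨ u.im ≠ v.im := by
    by_contra h
    push_neg at h
    exact hne (Zsqrtd.ext h.1 h.2)
  have hN : 0 < a ^ 2 + b ^ 2 := by nlinarith
  have hmN : m * (a ^ 2 + b ^ 2) = a * (u.re - v.re) + b * (u.im - v.im) := by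
    linear_combination (-a) * hre + (-b) * him
  have hnN : n * (a ^ 2 + b ^ 2) = a * (u.im - v.im) - b * (u.re - v.re) := by
    linear_combination (-a) * him + b * hre
  have hcu : 0 ≤ u.re ∧ u.re ≤ a - 1 ∧ -b ≤ u.im ∧ u.im ≤ a - 1 := by omega
  have hcv : 0 ≤ v.re ∧ v.re ≤ a - 1 ∧ -b ≤ v.im ∧ v.im ≤ a - 1 := by omega
  obtain ⟨hu1, hu2, hu3, hu4⟩ := hcu
  obtain ⟨hv1, hv2, hv3, hv4⟩ := hcv
  have hm1 : -1 ≤ m ∧ m ≤ 1 := by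
    constructor
    · by_contra h
      push_neg at h
      have h2 : m ≤ -2 := by omega
      nlinarith
    · by_contra h
      push_neg at h
      have h2 : 2 ≤ m := by omega
      nlinarith
  have hn1 : -1 ≤ n ∧ n ≤ 1 := by
    constructor
    · by_contra h
      push_neg at h
      have h2 : n ≤ -2 := by omega
      nlinarith
    · by_contra h
      push_neg at h
      have h2 : 2 ≤ n := by omega
      nlinarith
  obtain ⟨hm2, hm3⟩ := hm1
  obtain ⟨hn2, hn3⟩ := hn1
  interval_cases m <;> interval_cases n <;> omega

noncomputable def box (x1 x2 y1 y2 : ℤ) : Finset GaussianInt :=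
  (Finset.Ico x1 x2 ×ˢ Finset.Ico y1 y2).image fun p => ⟨p.1, p.2⟩

lemma mem_box {x1 x2 y1 y2 : ℤ} {z : GaussianInt} :
    z ∈ box x1 x2 y1 y2 ↔ x1 ≤ z.re ∧ z.re < x2 ∧ y1 ≤ z.im ∧ z.im < y2 := by
  simp only [box, Finset.mem_image, Finset.mem_product, Finset.mem_Ico, Prod.exists]
  constructor
  · rintro ⟨x, y, ⟨⟨h1, h2⟩, h3, h4⟩, rfl⟩
    exact ⟨h1, h2, h3, h4⟩
  · rintro ⟨h1, h2, h3, h4⟩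
    exact ⟨z.re, z.im, ⟨⟨h1, h2⟩, h3, h4⟩, rfl⟩

lemma card_box (x1 x2 y1 y2 : ℤ) :
    (box x1 x2 y1 y2).card = (x2 - x1).toNat * (y2 - y1).toNat := by
  rw [box, Finset.card_image_of_injective, Finset.card_product, Int.card_Ico, Int.card_Ico]
  intro p q h
  simp only at h
  have h1 := congrArg Zsqrtd.re h
  have h2 := congrArg Zsqrtd.im h
  simp only at h1 h2
  exact Prod.ext h1 h2

lemma toNat_mul_toNat {x y : ℤ} (hx : 0 ≤ x) (hy : 0 ≤ y) :
    (x * y).toNat = x.toNat * y.toNat := by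
  lift x to ℕ using hx
  lift y to ℕ using hy
  rw [← Int.natCast_mul, Int.toNat_natCast, Int.toNat_natCast, Int.toNat_natCast]

lemma red_props (a b : ℤ) (ha : 0 < a) (hb : 0 ≤ b) :
    ∃ (g M : ℤ) (red : GaussianInt → GaussianInt),
      0 < g ∧ 0 < M ∧ M * g = a ^ 2 + b ^ 2 ∧
      (∀ z, (⟨a, b⟩ : GaussianInt) ∣ (z - red z)) ∧
      (∀ z, red z ∈ box 0 M 0 g) := by
  set g : ℤ := (Int.gcd a b : ℤ) with hgdef
  have hg0 : 0 < g := Int.natCast_pos.mpr (Int.gcd_pos_iff.mpr (Or.inl ha.ne'))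
  have hga : g ∣ a := Int.gcd_dvd_left a b
  have hgb : g ∣ b := Int.gcd_dvd_right a b
  have hgN : g ∣ a ^ 2 + b ^ 2 := by
    refine dvd_add ?_ ?_
    · rw [pow_two]; exact hga.mul_right a
    · rw [pow_two]; exact hgb.mul_right b
  set M : ℤ := (a ^ 2 + b ^ 2) / g with hMdef
  have hMg : M * g = a ^ 2 + b ^ 2 := Int.ediv_mul_cancel hgN
  have hN0 : 0 < a ^ 2 + b ^ 2 := by nlinarith
  have hM0 : 0 < M := by nlinarith
  set u1 : GaussianInt := ⟨a, b⟩ * ⟨Int.gcdB a b, Int.gcdA a b⟩ with hu1def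
  have hbez := Int.gcd_eq_gcd_ab a b
  have hu1im : u1.im = g := by
    simp only [hu1def, Zsqrtd.im_mul]
    rw [hgdef]; linarith
  set u2 : GaussianInt := ⟨a, b⟩ * ⟨a / g, -(b / g)⟩ with hu2def
  have hu2re : u2.re = M := by
    simp only [hu2def, Zsqrtd.re_mul]
    have h1 : a * (a / g) = a ^ 2 / g := by
      rw [pow_two, Int.mul_ediv_assoc a hga]
    have h2 : b * (b / g) = b ^ 2 / g := by
      rw [pow_two, Int.mul_ediv_assoc b hgb]
    have h3 : a ^ 2 / g + b ^ 2 / g = (a ^ 2 + b ^ 2) / g :=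
      (Int.add_ediv_of_dvd_left (by rw [pow_two]; exact hga.mul_right a)).symm
    show a * (a / g) + (-1) * b * (-(b / g)) = M
    rw [hMdef, ← h3, ← h1, ← h2]; ring
  have hu2im : u2.im = 0 := by
    simp only [hu2def, Zsqrtd.im_mul]
    have h1 : a * (b / g) = a * b / g := (Int.mul_ediv_assoc a hgb).symm
    have h2 : b * (a / g) = b * a / g := (Int.mul_ediv_assoc b hga).symm
    rw [mul_neg, h1, h2, mul_comm a b]; ring
  refine ⟨g, M, fun z =>
    (z - ⟨z.im / g, 0⟩ * u1) - ⟨(z - ⟨z.im / g, 0⟩ * u1).re / M, 0⟩ * u2,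
    hg0, hM0, hMg, ?_, ?_⟩
  · intro z
    have d1 : (⟨a, b⟩ : GaussianInt) ∣ u1 := Dvd.intro _ rfl
    have d2 : (⟨a, b⟩ : GaussianInt) ∣ u2 := Dvd.intro _ rfl
    have heq : z - ((z - ⟨z.im / g, 0⟩ * u1) - ⟨(z - ⟨z.im / g, 0⟩ * u1).re / M, 0⟩ * u2)
        = ⟨z.im / g, 0⟩ * u1 + ⟨(z - ⟨z.im / g, 0⟩ * u1).re / M, 0⟩ * u2 := by ring
    rw [heq]
    exact dvd_add (d1.mul_left _) (d2.mul_left _)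
  · intro z
    set z1 := z - ⟨z.im / g, 0⟩ * u1 with hz1def
    have hz1im : z1.im = z.im - z.im / g * g := by
      simp [hz1def, Zsqrtd.im_mul, hu1im]
    have hrre : (z1 - ⟨z1.re / M, 0⟩ * u2).re = z1.re - z1.re / M * M := by
      simp [Zsqrtd.re_mul, hu2re, hu2im]
    have hrim : (z1 - ⟨z1.re / M, 0⟩ * u2).im = z1.im := by
      simp [Zsqrtd.im_mul, hu2re, hu2im]
    rw [mem_box, hrre, hrim, hz1im]
    have e1 := Int.emod_def z1.re M
    have e2 := Int.emod_def z.im g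
    have p1 := Int.emod_nonneg z1.re hM0.ne'
    have p2 := Int.emod_lt_of_pos z1.re hM0
    have p3 := Int.emod_nonneg z.im hg0.ne'
    have p4 := Int.emod_lt_of_pos z.im hg0
    refine ⟨by linarith, by linarith, by linarith, by linarith⟩

theorem two_squares_complete_residues (a b : ℤ) (hab : a > b) (hb : b ≥ 0)
    (S T : Set GaussianInt)
    (hS : S = {z : GaussianInt | 0 ≤ z.re ∧ z.re < a ∧ 0 ≤ z.im ∧ z.im < a})
    (hT : T = {z : GaussianInt | 0 ≤ z.re ∧ z.re < b ∧ -b ≤ z.im ∧ z.im < 0}) :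
    (∀ u ∈ S ∪ T, ∀ v ∈ S ∪ T, u ≠ v → ¬ (⟨a, b⟩ : GaussianInt) ∣ (u - v)) ∧
    ((S ∪ T).ncard = (a ^ 2 + b ^ 2).toNat) ∧
    (∀ z : GaussianInt, ∃ r ∈ S ∪ T, (⟨a, b⟩ : GaussianInt) ∣ (z - r)) := by
  have ha : 0 < a := lt_of_le_of_lt hb hab
  have hmem : ∀ x, x ∈ S ∪ T →
      (0 ≤ x.re ∧ x.re < a ∧ 0 ≤ x.im ∧ x.im < a) ∨
      (0 ≤ x.re ∧ x.re < b ∧ -b ≤ x.im ∧ x.im < 0) := by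
    intro x hx
    rcases hx with h | h
    · left; rw [hS] at h; exact h
    · right; rw [hT] at h; exact h
  have part1 : ∀ u ∈ S ∪ T, ∀ v ∈ S ∪ T, u ≠ v → ¬ (⟨a, b⟩ : GaussianInt) ∣ (u - v) := by
    intro u hu v hv hne
    exact no_congr a b hab hb u v (hmem u hu) (hmem v hv) hne
  have hSU : S ∪ T = ↑(box 0 a 0 a ∪ box 0 b (-b) 0) := by
    ext z
    simp only [Set.mem_union, hS, hT, Set.mem_setOf_eq, Finset.coe_union, Finset.mem_coe,
      mem_box]
  have hdisj : Disjoint (box 0 a 0 a) (box 0 b (-b) 0) := by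
    rw [Finset.disjoint_left]
    intro z h1 h2
    rw [mem_box] at h1 h2
    omega
  have hcardU : (box 0 a 0 a ∪ box 0 b (-b) 0).card = (a ^ 2 + b ^ 2).toNat := by
    rw [Finset.card_union_of_disjoint hdisj, card_box, card_box]
    rw [Int.toNat_add (by positivity) (by positivity), pow_two, pow_two,
      toNat_mul_toNat ha.le ha.le, toNat_mul_toNat hb hb]
    norm_num
  have part2 : (S ∪ T).ncard = (a ^ 2 + b ^ 2).toNat := by
    rw [hSU, Set.ncard_coe_finset, hcardU]
  refine ⟨part1, part2, ?_⟩
  obtain ⟨g, M, red, hg0, hM0, hMg, hdvd, hred⟩ := red_props a b ha hb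
  have hcardE : (box 0 M 0 g).card = (a ^ 2 + b ^ 2).toNat := by
    rw [card_box]
    rw [sub_zero, sub_zero, ← toNat_mul_toNat hM0.le hg0.le, hMg]
  have hsurj := Finset.surj_on_of_inj_on_of_card_le
    (s := box 0 a 0 a ∪ box 0 b (-b) 0) (t := box 0 M 0 g)
    (fun r _ => red r) (fun r _ => hred r)
    (by
      intro r1 r2 hr1 hr2 heq
      have heq' : red r1 = red r2 := heq
      by_contra hne
      have hmem1 : r1 ∈ S ∪ T := by rw [hSU]; exact_mod_cast hr1
      have hmem2 : r2 ∈ S ∪ T := by rw [hSU]; exact_mod_cast hr2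
      have hdd : (⟨a, b⟩ : GaussianInt) ∣ (r1 - r2) := by
        have : r1 - r2 = (r1 - red r1) - (r2 - red r2) := by rw [heq']; ring
        rw [this]
        exact dvd_sub (hdvd r1) (hdvd r2)
      exact part1 r1 hmem1 r2 hmem2 hne hdd)
    (by rw [hcardE, hcardU])
  intro z
  obtain ⟨r, hr, hrz⟩ := hsurj (red z) (hred z)
  refine ⟨r, by rw [hSU]; exact_mod_cast hr, ?_⟩
  have hrz' : red z = red r := hrz
  have : z - r = (z - red z) - (r - red r) := by rw [← hrz']; ring
  rw [this]
  exact dvd_sub (hdvd z) (hdvd r)
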